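/- The 1-Wasserstein distance between two centered normal distributions N(0, σ₁²) and N(0, σ₂²) with σ₁², σ₂² > 0 is bounded above by √(2/(π σ₁²)) · |σ₁² − σ₂²|. -/

import Mathlib

open MeasureTheory ProbabilityTheory Real Set Filter
open scoped ENNReal NNReal

namespace WGB

noncomputable def stdG : Measure ℝ := gaussianReal 0 1

lemma stdG_eq : stdG = volume.withDensity (gaussianPDF 0 1) :=
  gaussianReal_of_var_ne_zero 0 one_ne_zero

lemma pdf_eq (x : ℝ) : gaussianPDFReal 0 1 x = (Real.sqrt (2 * π))⁻¹ * rexp (- x ^ 2 / 2) := by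
  simp [gaussianPDFReal]

lemma integrable_stdG_iff (g : ℝ → ℝ) :
    Integrable g stdG ↔ Integrable (fun x => g x * gaussianPDFReal 0 1 x) volume := by
  rw [stdG_eq, integrable_withDensity_iff (measurable_gaussianPDF 0 1)
    (ae_of_all _ fun x => ENNReal.ofReal_lt_top)]
  refine integrable_congr (ae_of_all _ fun x => ?_)
  show g x * (gaussianPDF 0 1 x).toReal = g x * gaussianPDFReal 0 1 x
  rw [show gaussianPDF 0 1 x = ENNReal.ofReal (gaussianPDFReal 0 1 x) from rfl,
    ENNReal.toReal_ofReal (gaussianPDFReal_nonneg 0 1 x)]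

lemma integral_stdG (g : ℝ → ℝ) :
    ∫ x, g x ∂stdG = ∫ x, g x * gaussianPDFReal 0 1 x := by
  rw [stdG_eq]
  have : gaussianPDF 0 1 = fun x => ((gaussianPDFReal 0 1 x).toNNReal : ℝ≥0∞) := rfl
  rw [this, integral_withDensity_eq_integral_smul
    ((measurable_gaussianPDFReal 0 1).real_toNNReal) g]
  refine integral_congr_ae (ae_of_all _ fun x => ?_)
  show (gaussianPDFReal 0 1 x).toNNReal • g x = g x * gaussianPDFReal 0 1 x
  rw [NNReal.smul_def, smul_eq_mul, Real.coe_toNNReal _ (gaussianPDFReal_nonneg 0 1 x), mul_comm]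

lemma integrable_abs_mul_exp : Integrable (fun x : ℝ => |x| * rexp (- x ^ 2 / 2)) := by
  have h := (integrable_mul_exp_neg_mul_sq (b := 1/2) (by norm_num)).abs
  refine h.congr (ae_of_all _ fun x => ?_)
  show |x * rexp (-(1/2) * x ^ 2)| = |x| * rexp (- x ^ 2 / 2)
  rw [abs_mul, abs_of_nonneg (Real.exp_pos _).le]
  congr 1
  ring

lemma integrable_abs_stdG : Integrable (fun x : ℝ => |x|) stdG := by
  rw [integrable_stdG_iff]
  have : (fun x : ℝ => |x| * gaussianPDFReal 0 1 x)
      = fun x => (Real.sqrt (2 * π))⁻¹ * (|x| * rexp (- x ^ 2 / 2)) := by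
    ext x; rw [pdf_eq]; ring
  rw [this]
  exact integrable_abs_mul_exp.const_mul _

lemma integral_Ioi_mul_exp : ∫ x in Ioi (0:ℝ), x * rexp (- x ^ 2 / 2) = 1 := by
  have hderiv : ∀ x ∈ Ici (0:ℝ), HasDerivAt (fun y : ℝ => -rexp (- y ^ 2 / 2))
      (x * rexp (- x ^ 2 / 2)) x := by
    intro x _
    have h1 : HasDerivAt (fun y : ℝ => - y ^ 2 / 2) (-x) x := by
      have := ((hasDerivAt_pow 2 x).neg).div_const 2
      refine this.congr_deriv ?_
      simp; ring
    have := (h1.exp).neg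
    refine this.congr_deriv ?_
    rw [mul_comm]; ring
  have hint : IntegrableOn (fun x : ℝ => x * rexp (- x ^ 2 / 2)) (Ioi 0) := by
    refine (integrable_abs_mul_exp.congr (ae_of_all _ fun x => rfl)).integrableOn.congr_fun
      (fun x hx => ?_) measurableSet_Ioi
    beta_reduce
    rw [abs_of_nonneg (le_of_lt (mem_Ioi.mp hx))]
  have htend : Tendsto (fun y : ℝ => -rexp (- y ^ 2 / 2)) atTop (nhds 0) := by
    rw [← neg_zero]
    refine Tendsto.neg ?_
    apply Real.tendsto_exp_atBot.comp
    have : Tendsto (fun y : ℝ => y ^ 2) atTop atTop := tendsto_pow_atTop two_ne_zero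
    have := (tendsto_neg_atBot_iff.mpr this).atBot_div_const (by norm_num : (0:ℝ) < 2)
    simpa [neg_div] using this
  have := integral_Ioi_of_hasDerivAt_of_tendsto' hderiv hint htend
  simpa using this

lemma integral_abs_stdG : ∫ x, |x| ∂stdG = Real.sqrt (2 / π) := by
  rw [integral_stdG]
  have h1 : (fun x : ℝ => |x| * gaussianPDFReal 0 1 x)
      = fun x => (Real.sqrt (2 * π))⁻¹ * (|x| * rexp (- |x| ^ 2 / 2)) := by
    ext x; rw [pdf_eq, sq_abs]; ring
  rw [h1, integral_const_mul, integral_comp_abs (f := fun x => x * rexp (- x ^ 2 / 2)),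
    integral_Ioi_mul_exp]
  rw [mul_one, Real.sqrt_mul (by norm_num : (0:ℝ) ≤ 2) π,
    Real.sqrt_div (by norm_num : (0:ℝ) ≤ 2) π]
  have h2 : Real.sqrt 2 ≠ 0 := by positivity
  have hp : Real.sqrt π ≠ 0 := by positivity
  have hs : Real.sqrt 2 * Real.sqrt 2 = 2 := Real.mul_self_sqrt (by norm_num)
  field_simp
  nlinarith [Real.sqrt_nonneg π, Real.sqrt_nonneg 2]

lemma map_sqrt (v : NNReal) (hv : v ≠ 0) :
    stdG.map (fun x => Real.sqrt v * x) = gaussianReal 0 v := by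
  have h := gaussianReal_map_const_mul (μ := 0) (v := 1) (Real.sqrt v)
  have : (fun x => Real.sqrt v * x) = (Real.sqrt v * ·) := rfl
  rw [stdG, this, h]
  congr 1
  · simp
  · ext
    simp [Real.sq_sqrt v.2]

instance : IsProbabilityMeasure stdG := by unfold stdG; infer_instance

end WGB

open MeasureTheory ProbabilityTheory

/-- The 1-Wasserstein distance between `N(0, v₁)` and `N(0, v₂)` (variances `v₁, v₂ > 0`)
is bounded by `√(2/(π v₁)) · |v₁ − v₂|`: every 1-Lipschitz test function discrepancy
obeys this bound. -/
theorem wasserstein_gaussian_bound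
    (v₁ v₂ : NNReal) (h₁ : 0 < v₁) (h₂ : 0 < v₂)
    (h : ℝ → ℝ) (hh : LipschitzWith 1 h) :
    |(∫ x, h x ∂(gaussianReal 0 v₁)) - ∫ x, h x ∂(gaussianReal 0 v₂)| ≤
      Real.sqrt (2 / (Real.pi * v₁)) * |(v₁ : ℝ) - (v₂ : ℝ)| := by
  set σ₁ : ℝ := Real.sqrt v₁ with hσ₁def
  set σ₂ : ℝ := Real.sqrt v₂ with hσ₂def
  have hv₁ : (0:ℝ) < v₁ := by exact_mod_cast h₁
  have hv₂ : (0:ℝ) < v₂ := by exact_mod_cast h₂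
  have hσ₁ : 0 < σ₁ := Real.sqrt_pos.mpr hv₁
  have hσ₂ : 0 < σ₂ := Real.sqrt_pos.mpr hv₂
  have e₁ : ∫ x, h x ∂(gaussianReal 0 v₁) = ∫ x, h (σ₁ * x) ∂WGB.stdG := by
    rw [← WGB.map_sqrt v₁ h₁.ne', integral_map
      (measurable_const_mul σ₁).aemeasurable hh.continuous.aestronglyMeasurable]
  have e₂ : ∫ x, h x ∂(gaussianReal 0 v₂) = ∫ x, h (σ₂ * x) ∂WGB.stdG := by
    rw [← WGB.map_sqrt v₂ h₂.ne', integral_map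
      (measurable_const_mul σ₂).aemeasurable hh.continuous.aestronglyMeasurable]
  have hint : ∀ c : ℝ, Integrable (fun x => h (c * x)) WGB.stdG := by
    intro c
    refine Integrable.mono'
      ((integrable_const |h 0|).add (WGB.integrable_abs_stdG.const_mul |c|))
      ((hh.continuous.comp (continuous_const.mul continuous_id)).aestronglyMeasurable)
      (ae_of_all _ fun x => ?_)
    have hd := hh.dist_le_mul (c * x) 0
    rw [Real.dist_eq, Real.dist_eq, sub_zero, NNReal.coe_one, one_mul] at hd
    have : |h (c * x)| ≤ |h (c * x) - h 0| + |h 0| := by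
      calc |h (c * x)| = |(h (c * x) - h 0) + h 0| := by ring_nf
      _ ≤ |h (c * x) - h 0| + |h 0| := abs_add_le _ _
    simp only [Pi.add_apply]
    calc ‖h (c * x)‖ = |h (c * x)| := rfl
    _ ≤ |h (c * x) - h 0| + |h 0| := this
    _ ≤ |c * x| + |h 0| := by linarith
    _ = |h 0| + |c| * |x| := by rw [abs_mul]; ring
  rw [e₁, e₂, ← integral_sub (hint σ₁) (hint σ₂)]
  have key : |∫ x, (h (σ₁ * x) - h (σ₂ * x)) ∂WGB.stdG| ≤ |σ₁ - σ₂| * Real.sqrt (2 / π) := by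
    calc |∫ x, (h (σ₁ * x) - h (σ₂ * x)) ∂WGB.stdG|
        ≤ ∫ x, |h (σ₁ * x) - h (σ₂ * x)| ∂WGB.stdG := by
          simpa [Real.norm_eq_abs] using
            norm_integral_le_integral_norm (μ := WGB.stdG) (fun x => h (σ₁ * x) - h (σ₂ * x))
    _ ≤ ∫ x, |σ₁ - σ₂| * |x| ∂WGB.stdG := by
        refine integral_mono ((hint σ₁).sub (hint σ₂)).abs
          (WGB.integrable_abs_stdG.const_mul _) (fun x => ?_)
        have hd := hh.dist_le_mul (σ₁ * x) (σ₂ * x)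
        rw [Real.dist_eq, Real.dist_eq, NNReal.coe_one, one_mul] at hd
        calc |h (σ₁ * x) - h (σ₂ * x)| ≤ |σ₁ * x - σ₂ * x| := hd
        _ = |(σ₁ - σ₂) * x| := by ring_nf
        _ = |σ₁ - σ₂| * |x| := abs_mul _ _
    _ = |σ₁ - σ₂| * Real.sqrt (2 / π) := by
        rw [integral_const_mul, WGB.integral_abs_stdG]
  refine key.trans ?_
  have hvs : Real.sqrt (2 / (π * v₁)) = Real.sqrt (2 / π) / σ₁ := by
    rw [hσ₁def, ← Real.sqrt_div (by positivity : (0:ℝ) ≤ 2 / π)]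
    congr 1
    field_simp
  have hvd : |(v₁ : ℝ) - (v₂ : ℝ)| = |σ₁ - σ₂| * (σ₁ + σ₂) := by
    have e1 : (v₁ : ℝ) = σ₁ ^ 2 := (Real.sq_sqrt v₁.2).symm
    have e2 : (v₂ : ℝ) = σ₂ ^ 2 := (Real.sq_sqrt v₂.2).symm
    rw [e1, e2, show σ₁ ^ 2 - σ₂ ^ 2 = (σ₁ - σ₂) * (σ₁ + σ₂) by ring, abs_mul,
      abs_of_pos (show (0:ℝ) < σ₁ + σ₂ by linarith)]
  rw [hvs, hvd, div_mul_eq_mul_div, le_div_iff₀ hσ₁]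
  have hs : (0:ℝ) ≤ Real.sqrt (2 / π) := Real.sqrt_nonneg _
  have hd : (0:ℝ) ≤ |σ₁ - σ₂| := abs_nonneg _
  nlinarith [mul_nonneg (mul_nonneg hs hd) hσ₂.le]
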